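/- Let G be a group acting freely on a set X, i.e. for all g ∈ G and x ∈ X, if g • x = x then g = 1. Consider the induced action of G on the free group F(X) on the basis X, given by permuting the basis elements. If g ∈ G and f ∈ F(X) satisfy g • f = f, then g = 1 or f = 1. -/
import Mathlib

open Classical in
lemma reduce_map_of_injective {α β : Type*} {φ : α → β} (hφ : Function.Injective φ)
    (L : List (α × Bool)) :
    FreeGroup.reduce (L.map fun p => (φ p.1, p.2)) =
      (FreeGroup.reduce L).map fun p => (φ p.1, p.2) := by
  induction L with
  | nil => simp
  | cons x L ih =>
    rw [List.map_cons, FreeGroup.reduce.cons, FreeGroup.reduce.cons, ih]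
    cases h : FreeGroup.reduce L with
    | nil => simp
    | cons hd tl =>
      simp only [List.map_cons]
      by_cases hc : x.1 = hd.1 ∧ x.2 = !hd.2
      · rw [if_pos ⟨congrArg φ hc.1, hc.2⟩, if_pos hc]
      · rw [if_neg (fun ⟨h1, h2⟩ => hc ⟨hφ h1, h2⟩), if_neg hc]; simp

/-- Discrete analogue of Lemma 5.3: if a group `G` acts freely on a set `X`,
then for the induced action on the free group `F(X)` (by permuting the basis),
`g • f = f` forces `g = 1` or `f = 1`. -/
theorem stmt_9 {G X : Type*} [Group G] [MulAction G X]
    (hfree : ∀ (g : G) (x : X), g • x = x → g = 1)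
    (g : G) (f : FreeGroup X)
    (hfix : FreeGroup.map (fun x => g • x) f = f) :
    g = 1 ∨ f = 1 := by
  classical
  by_cases hf : f = 1
  · exact Or.inr hf
  · left
    have hinj : Function.Injective (fun x : X => g • x) :=
      MulAction.injective g
    have hword : f.toWord.map (fun p => ((g • p.1 : X), p.2)) = f.toWord := by
      have h1 : (FreeGroup.map (fun x : X => g • x) f).toWord
          = f.toWord.map (fun p => ((g • p.1 : X), p.2)) := by
        conv_lhs => rw [← FreeGroup.mk_toWord (x := f)]
        rw [FreeGroup.map.mk, FreeGroup.toWord_mk, reduce_map_of_injective hinj,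
          FreeGroup.reduce_toWord]
      rw [← h1, hfix]
    cases hw : f.toWord with
    | nil => exact absurd (FreeGroup.toWord_eq_nil_iff.mp hw) hf
    | cons p L =>
      rw [hw, List.map_cons] at hword
      have : g • p.1 = p.1 := congrArg Prod.fst (List.head_eq_of_cons_eq hword)
      exact hfree g p.1 this
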